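/- Let G be a finite abelian group of order n ≥ 5 with enumeration g_0, ..., g_{n-1}, g_0 = 0, and L = {x ∈ ℤ^n : Σ x_i = 0, Σ x_i g_i = 0}. Then L is generated by its vectors of minimal nonzero norm (which equals 2); in particular L is well-rounded, i.e., its minimal vectors span the (n−1)-dimensional real space {v ∈ ℝ^n : Σ v_i = 0}. -/

import Mathlib

/-- For `G` finite abelian of order `n ≥ 5` with enumeration `g`,
`g 0 = 0`, the lattice `L = {x ∈ ℤ^n : ∑ x i = 0, ∑ x i • g i = 0}` has minimal
nonzero norm `2`, is generated by its norm-`2` vectors, and is well-rounded: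
the real span of its minimal vectors is the hyperplane `{v : ∑ v i = 0}`. -/
theorem stmt_10 (n : ℕ) (hn : 5 ≤ n) (G : Type) [AddCommGroup G] [Fintype G]
    (hcard : Fintype.card G = n) (g : Fin n ≃ G) (hg0 : g ⟨0, by omega⟩ = 0)
    (L : AddSubgroup (Fin n → ℤ))
    (hL : ∀ x, x ∈ L ↔ (∑ i, x i = 0 ∧ ∑ i, x i • g i = 0))
    (M : Set (Fin n → ℤ))
    (hM : M = {x | x ∈ L ∧ Real.sqrt (∑ i, ((x i : ℝ)) ^ 2) = 2}) :
    (∀ x ∈ L, x ≠ 0 → 2 ≤ Real.sqrt (∑ i, ((x i : ℝ)) ^ 2)) ∧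
    AddSubgroup.closure M = L ∧
    (Submodule.span ℝ ((fun x : Fin n → ℤ => fun i => ((x i : ℝ))) '' M) : Set (Fin n → ℝ)) =
      {v : Fin n → ℝ | ∑ i, v i = 0} := by
  classical
  set z : Fin n := ⟨0, by omega⟩ with hz
  have hgz : g z = 0 := hg0
  set E : Fin n → (Fin n → ℤ) := fun a => Pi.single a 1 with hE
  have sumE : ∀ a : Fin n, ∑ i, E a i = 1 := by
    intro a; simp [hE, Pi.single_apply]
  have sumEg : ∀ a : Fin n, ∑ i, E a i • g i = g a := by
    intro a
    rw [Finset.sum_eq_single a]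
    · simp [hE]
    · intro b _ hb; simp [hE, Pi.single_apply, hb]
    · simp
  have hσ : ∀ h : G, h ≠ 0 → g.symm h ≠ z := by
    intro h hh he
    exact hh (by rw [← g.apply_symm_apply h, he, hgz])
  -- membership of the basic norm-2 vectors in M
  have memM : ∀ a b c : Fin n, a ≠ b → a ≠ c → a ≠ z → b ≠ c → b ≠ z → c ≠ z →
      g a + g b = g c → E a + E b - E c - E z ∈ M := by
    intro a b c hab hac haz hbc hbz hcz habc
    rw [hM]
    constructor
    · rw [hL]
      constructor
      · simp only [Pi.sub_apply, Pi.add_apply, Finset.sum_sub_distrib,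
          Finset.sum_add_distrib, sumE]
        ring
      · have : ∀ i, (E a + E b - E c - E z) i • g i
            = E a i • g i + E b i • g i - E c i • g i - E z i • g i := by
          intro i; simp [sub_smul, add_smul]
        simp only [this, Finset.sum_sub_distrib, Finset.sum_add_distrib, sumEg]
        rw [habc, hgz]; abel
    · have hsq : ∀ i, (((E a + E b - E c - E z) i : ℤ) : ℝ) ^ 2 =
          (if i = a then 1 else 0) + (if i = b then 1 else 0)
          + (if i = c then 1 else 0) + (if i = z then 1 else 0) := by
        intro i
        by_cases ha : i = a
        · subst ha; simp [hE, Pi.single_apply, hab, hac, haz, Ne.symm]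
        · by_cases hb : i = b
          · subst hb; simp [hE, Pi.single_apply, Ne.symm hab, hbc, hbz, ha]
          · by_cases hc : i = c
            · subst hc; simp [hE, Pi.single_apply, Ne.symm hac, Ne.symm hbc, hcz, ha, hb]
            · by_cases hzz : i = z
              · subst hzz; simp [hE, Pi.single_apply, Ne.symm haz, Ne.symm hbz, Ne.symm hcz, ha, hb, hc]
              · simp [hE, Pi.single_apply, ha, hb, hc, hzz]
      rw [show (2:ℝ) = Real.sqrt 4 by
        rw [show (4:ℝ) = 2 ^ 2 by norm_num, Real.sqrt_sq (by norm_num : (0:ℝ) ≤ 2)]]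
      congr 1
      simp only [hsq, Finset.sum_add_distrib, Finset.sum_ite_eq', Finset.mem_univ, if_true]
      norm_num
  set R : AddSubgroup (Fin n → ℤ) := AddSubgroup.closure M with hR
  set δ : G → (Fin n → ℤ) := fun h => if h = 0 then 0 else E (g.symm h) - E z with hδ
  have δ0 : δ 0 = 0 := if_pos rfl
  have δne : ∀ h, h ≠ 0 → δ h = E (g.symm h) - E z := fun h hh => if_neg hh
  have B1 : ∀ h h' : G, h ≠ 0 → h' ≠ 0 → h ≠ h' → h + h' ≠ 0 →
      δ h + δ h' - δ (h + h') ∈ R := by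
    intro h h' h0 h0' hne hs
    have key : δ h + δ h' - δ (h + h')
        = E (g.symm h) + E (g.symm h') - E (g.symm (h + h')) - E z := by
      rw [δne _ h0, δne _ h0', δne _ hs]; abel
    rw [key]
    apply AddSubgroup.subset_closure
    apply memM
    · exact fun e => hne (g.symm.injective e)
    · intro e
      have := g.symm.injective e
      exact h0' (by rwa [left_eq_add] at this)
    · exact hσ _ h0
    · intro e
      have := g.symm.injective e
      exact h0 (by rwa [right_eq_add] at this)
    · exact hσ _ h0'
    · exact hσ _ hs
    · simp
  have avoid : ∀ s : Finset G, s.card < n → ∃ t, t ∉ s := by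
    intro s hs
    by_contra hc
    push_neg at hc
    have : (Finset.univ : Finset G) ⊆ s := fun t _ => hc t
    have := Finset.card_le_card this
    rw [Finset.card_univ, hcard] at this
    omega
  have B2 : ∀ h : G, h ≠ 0 → δ h + δ (-h) ∈ R := by
    intro h h0
    obtain ⟨t, ht⟩ := avoid {0, h, -h, -h - h} (by
      calc ({0, h, -h, -h - h} : Finset G).card ≤ 4 := by
            apply le_trans (Finset.card_insert_le _ _)
            apply Nat.succ_le_succ
            apply le_trans (Finset.card_insert_le _ _)
            apply Nat.succ_le_succ
            apply le_trans (Finset.card_insert_le _ _)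
            simp
        _ < n := by omega)
    simp only [Finset.mem_insert, Finset.mem_singleton, not_or] at ht
    obtain ⟨ht0, hth, htn, ht2⟩ := ht
    have c1 := B1 h t h0 ht0 (fun e => hth e.symm)
      (fun e => htn (eq_neg_of_add_eq_zero_right e))
    have c2 := B1 (-h) (h + t) (by simpa using h0)
      (fun e => htn (eq_neg_of_add_eq_zero_right e))
      (fun e => ht2 (by rw [e]; abel))
      (by simpa using ht0)
    rw [show -h + (h + t) = t by abel] at c2
    have key : δ h + δ (-h)
        = (δ h + δ t - δ (h + t)) + (δ (-h) + δ (h + t) - δ t) := by abel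
    rw [key]
    exact add_mem c1 c2
  have C : ∀ h h' : G, h ≠ h' → δ h + δ h' - δ (h + h') ∈ R := by
    intro h h' hne
    by_cases h0 : h = 0
    · subst h0; rw [δ0, zero_add, zero_add, sub_self]; exact zero_mem R
    by_cases h0' : h' = 0
    · subst h0'; rw [δ0, add_zero, add_zero, sub_self]; exact zero_mem R
    by_cases hs : h + h' = 0
    · rw [hs, δ0, sub_zero, eq_neg_of_add_eq_zero_right hs]
      exact B2 h h0
    · exact B1 h h' h0 h0' hne hs
  have D : ∀ h : G, δ h + δ h - δ (h + h) ∈ R := by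
    intro h
    by_cases h0 : h = 0
    · subst h0; simp only [δ0, add_zero, zero_add, sub_self, sub_zero]
      simpa [δ0] using zero_mem R
    obtain ⟨t, ht⟩ := avoid {0, h, h + h} (by
      calc ({0, h, h + h} : Finset G).card ≤ 3 := by
            apply le_trans (Finset.card_insert_le _ _)
            apply Nat.succ_le_succ
            apply le_trans (Finset.card_insert_le _ _)
            simp
        _ < n := by omega)
    simp only [Finset.mem_insert, Finset.mem_singleton, not_or] at ht
    obtain ⟨ht0, hth, ht2⟩ := ht
    have c1 := C h t (fun e => hth e.symm)
    have c2 := C h (h + t) (by intro e; exact ht0 (by rwa [left_eq_add] at e))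
    rw [← add_assoc] at c2
    have c3 := C (h + h) t (fun e => ht2 e.symm)
    have key : δ h + δ h - δ (h + h)
        = (δ h + δ t - δ (h + t)) + (δ h + δ (h + t) - δ (h + h + t))
          - (δ (h + h) + δ t - δ (h + h + t)) := by abel
    rw [key]
    exact sub_mem (add_mem c1 c2) c3
  have B : ∀ h h' : G, δ h + δ h' - δ (h + h') ∈ R := by
    intro h h'
    by_cases he : h = h'
    · subst he; exact D h
    · exact C h h' he
  have claimA : ∀ N : ℕ, ∀ x : Fin n → ℤ, (∑ i, x i = 0) →
      (∑ j ∈ Finset.univ.erase z, (x j).natAbs) = N →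
      x - δ (∑ i, x i • g i) ∈ R := by
    intro N
    induction N using Nat.strong_induction_on with
    | _ N IH =>
      intro x hsum hN
      by_cases hx : ∀ i, i ≠ z → x i = 0
      · have hxz : ∑ i, x i = x z :=
          Finset.sum_eq_single z (fun b _ hb => hx b hb)
            (fun h => absurd (Finset.mem_univ z) h)
        have hx0 : x = 0 := by
          funext j
          by_cases hj : j = z
          · subst hj; rw [Pi.zero_apply, ← hxz, hsum]
          · rw [Pi.zero_apply]; exact hx j hj
        rw [hx0]
        simpa [δ0] using zero_mem R
      · push_neg at hx
        obtain ⟨i, hiz, hxi⟩ := hx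
        set ε : ℤ := if 0 < x i then 1 else -1 with hε
        set v : Fin n → ℤ := E i - E z with hv
        set x' : Fin n → ℤ := x - ε • v with hx'
        have hvj : ∀ j, j ≠ i → j ≠ z → v j = 0 := by
          intro j hji hjz
          simp [hv, hE, Pi.single_apply, hji, hjz]
        have hvi : v i = 1 := by
          simp [hv, hE, Pi.single_apply, hiz]
        have hx'j : ∀ j, j ≠ i → j ≠ z → x' j = x j := by
          intro j hji hjz
          simp [hx', hvj j hji hjz]
        have hx'i : x' i = x i - ε := by
          simp [hx', hvi]
        have hx'sum : ∑ j, x' j = 0 := by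
          have : ∀ j, x' j = x j - ε * v j := by intro j; simp [hx', mul_comm]
          rw [Finset.sum_congr rfl (fun j _ => this j), Finset.sum_sub_distrib,
            ← Finset.mul_sum]
          have hvsum : ∑ j, v j = 0 := by
            have : ∀ j, v j = E i j - E z j := fun j => rfl
            rw [Finset.sum_congr rfl (fun j _ => this j), Finset.sum_sub_distrib,
              sumE, sumE, sub_self]
          rw [hvsum, hsum, mul_zero, sub_zero]
        have hstep : ∑ j ∈ Finset.univ.erase z, (x' j).natAbs
            < ∑ j ∈ Finset.univ.erase z, (x j).natAbs := by
          apply Finset.sum_lt_sum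
          · intro j hj
            by_cases hji : j = i
            · subst hji
              rw [hx'i, hε]
              split_ifs with hpos <;> omega
            · rw [hx'j j hji (Finset.mem_erase.1 hj).1]
          · refine ⟨i, Finset.mem_erase.2 ⟨hiz, Finset.mem_univ i⟩, ?_⟩
            rw [hx'i, hε]
            split_ifs with hpos <;> omega
        have hIH := IH _ (hN ▸ hstep) x' hx'sum rfl
        have hs' : ∑ j, x' j • g j = (∑ j, x j • g j) - ε • g i := by
          have h1 : ∀ j, x' j • g j = x j • g j - ε • (v j • g j) := by
            intro j
            have : x' j = x j - ε * v j := by simp [hx', mul_comm]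
            rw [this, sub_smul, mul_smul]
          rw [Finset.sum_congr rfl (fun j _ => h1 j), Finset.sum_sub_distrib,
            ← Finset.smul_sum]
          have h2 : ∑ j, v j • g j = g i := by
            have : ∀ j, v j • g j = E i j • g j - E z j • g j := by
              intro j; rw [show v j = E i j - E z j from rfl, sub_smul]
            rw [Finset.sum_congr rfl (fun j _ => this j), Finset.sum_sub_distrib,
              sumEg, sumEg, hgz, sub_zero]
          rw [h2]
        have hgi0 : g i ≠ 0 := fun e => hiz (g.injective (by rw [e, hgz]))
        have hvδ : v = δ (g i) := by rw [δne _ hgi0, Equiv.symm_apply_apply]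
        set s : G := ∑ j, x j • g j with hsdef
        have hkey : ε • v + δ (s - ε • g i) - δ s ∈ R := by
          by_cases hpos : 0 < x i
          · have hε1 : ε = 1 := if_pos hpos
            rw [hε1, one_smul, one_smul, hvδ]
            have := B (g i) (s - g i)
            rwa [add_sub_cancel] at this
          · have hε1 : ε = -1 := if_neg hpos
            rw [hε1, hvδ]
            have h1 : s - (-1 : ℤ) • g i = s + g i := by simp
            rw [h1]
            have h2 := neg_mem (B (g i) s)
            have h3 : -(δ (g i) + δ s - δ (g i + s)) = -1 • δ (g i) + δ (g i + s) - δ s := by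
              simp only [neg_one_smul]; abel
            rw [h3, add_comm (g i) s] at h2
            exact h2
        have hfinal : x - δ s = (x' - δ (∑ j, x' j • g j)) + (ε • v + δ (s - ε • g i) - δ s) := by
          rw [hs', hx']
          abel
        rw [hfinal]
        exact add_mem hIH hkey
  have hML : M ⊆ (L : Set (Fin n → ℤ)) := by rw [hM]; exact fun x hx => hx.1
  have hLR : AddSubgroup.closure M = L := by
    apply le_antisymm
    · exact (AddSubgroup.closure_le L).2 hML
    · intro x hx
      obtain ⟨hsum, hsg⟩ := (hL x).1 hx
      have := claimA _ x hsum rfl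
      rwa [hsg, δ0, sub_zero] at this
  have hmin4 : ∀ x : Fin n → ℤ, x ∈ L → x ≠ 0 → (4:ℤ) ≤ ∑ i, (x i)^2 := by
    intro x hxL hx0
    obtain ⟨hsum, hsg⟩ := (hL x).1 hxL
    by_contra hlt
    push_neg at hlt
    have hnn : ∀ i ∈ Finset.univ, (0:ℤ) ≤ (x i)^2 := fun i _ => sq_nonneg _
    have hbound : ∀ i, (x i)^2 ≤ 3 := by
      intro i
      have := Finset.single_le_sum hnn (Finset.mem_univ i)
      omega
    have habs : ∀ i, -1 ≤ x i ∧ x i ≤ 1 := by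
      intro i
      have h := hbound i
      constructor
      · by_contra hc; push_neg at hc
        have h2 : x i ≤ -2 := by omega
        nlinarith
      · by_contra hc; push_neg at hc
        have h2 : 2 ≤ x i := by omega
        nlinarith
    have hexp : ∃ i, x i = 1 := by
      by_contra hc; push_neg at hc
      have hle : ∀ i ∈ Finset.univ, x i ≤ 0 := by
        intro i _; have h1 := habs i; have h2 := hc i; omega
      refine hx0 (funext fun i => ?_)
      exact (Finset.sum_eq_zero_iff_of_nonpos hle).1 hsum i (Finset.mem_univ i)
    have hexn : ∃ j, x j = -1 := by
      by_contra hc; push_neg at hc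
      have hle : ∀ i ∈ Finset.univ, 0 ≤ x i := by
        intro i _; have h1 := habs i; have h2 := hc i; omega
      refine hx0 (funext fun i => ?_)
      exact (Finset.sum_eq_zero_iff_of_nonneg hle).1 hsum i (Finset.mem_univ i)
    obtain ⟨i, hi⟩ := hexp
    obtain ⟨j, hj⟩ := hexn
    have hij : i ≠ j := by intro e; rw [e, hj] at hi; omega
    by_cases hk : ∃ k, k ≠ i ∧ k ≠ j ∧ x k ≠ 0
    · obtain ⟨k, hki, hkj, hk0⟩ := hk
      have hk1 : (x k)^2 = 1 := by
        have h1 := habs k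
        have : x k = 1 ∨ x k = -1 := by omega
        rcases this with h | h <;> rw [h] <;> ring
      have hnotin1 : i ∉ ({j, k} : Finset (Fin n)) := by simp [hij, Ne.symm hki]
      have hnotin2 : j ∉ ({k} : Finset (Fin n)) := by simp [Ne.symm hkj]
      have hcard3 : ∑ m ∈ ({i, j, k} : Finset (Fin n)), (x m)^2 = 3 := by
        rw [Finset.sum_insert hnotin1, Finset.sum_insert hnotin2, Finset.sum_singleton,
          hi, hj, hk1]
        ring
      have hsub : ({i, j, k} : Finset (Fin n)) ⊆ Finset.univ := Finset.subset_univ _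
      have hsplit : ∑ m ∈ Finset.univ \ ({i, j, k} : Finset (Fin n)), (x m)^2
          + ∑ m ∈ ({i, j, k} : Finset (Fin n)), (x m)^2 = ∑ m, (x m)^2 :=
        Finset.sum_sdiff hsub
      have hrest0 : ∀ m ∈ Finset.univ \ ({i, j, k} : Finset (Fin n)), (x m)^2 = 0 := by
        have hle0 : ∑ m ∈ Finset.univ \ ({i, j, k} : Finset (Fin n)), (x m)^2 ≤ 0 := by
          omega
        intro m hm
        have h1 : ∀ m' ∈ Finset.univ \ ({i, j, k} : Finset (Fin n)), (0:ℤ) ≤ (x m')^2 :=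
          fun m' _ => sq_nonneg _
        exact (Finset.sum_eq_zero_iff_of_nonneg h1).1 (le_antisymm hle0 (Finset.sum_nonneg h1)) m hm
      have hrest : ∀ m ∈ Finset.univ \ ({i, j, k} : Finset (Fin n)), x m = 0 := by
        intro m hm
        have := hrest0 m hm
        nlinarith [this]
      have hsplit2 : ∑ m ∈ Finset.univ \ ({i, j, k} : Finset (Fin n)), x m
          + ∑ m ∈ ({i, j, k} : Finset (Fin n)), x m = ∑ m, x m :=
        Finset.sum_sdiff hsub
      have hsum3 : ∑ m ∈ ({i, j, k} : Finset (Fin n)), x m = x k := by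
        rw [Finset.sum_insert hnotin1, Finset.sum_insert hnotin2, Finset.sum_singleton,
          hi, hj]
        ring
      have hrsum : ∑ m ∈ Finset.univ \ ({i, j, k} : Finset (Fin n)), x m = 0 :=
        Finset.sum_eq_zero hrest
      rw [hrsum, hsum3, zero_add] at hsplit2
      rw [← hsplit2] at hsum
      have := habs k
      omega
    · push_neg at hk
      have hsup : ∀ m, m ∉ ({i, j} : Finset (Fin n)) → x m = 0 := by
        intro m hm
        simp only [Finset.mem_insert, Finset.mem_singleton, not_or] at hm
        exact hk m hm.1 hm.2
      have hgsum : ∑ m, x m • g m = ∑ m ∈ ({i, j} : Finset (Fin n)), x m • g m := by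
        refine (Finset.sum_subset (Finset.subset_univ _) ?_).symm
        intro m _ hm
        rw [hsup m hm, zero_smul]
      have hnotin : i ∉ ({j} : Finset (Fin n)) := by simp [hij]
      rw [Finset.sum_insert hnotin, Finset.sum_singleton, hi, hj] at hgsum
      rw [hgsum] at hsg
      simp only [one_smul, neg_smul, neg_one_zsmul] at hsg
      have : g i = g j := by
        have := sub_eq_zero.1 (by rw [← sub_eq_add_neg] at hsg; exact hsg)
        exact this
      exact hij (g.injective this)
  -- the additive hom casting to ℝ
  have hf : ∃ f : (Fin n → ℤ) →+ (Fin n → ℝ), ∀ x i, f x i = (x i : ℝ) := by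
    refine ⟨{ toFun := fun x i => (x i : ℝ),
              map_zero' := by funext i; simp,
              map_add' := by intro a b; funext i; simp }, fun x i => rfl⟩
  obtain ⟨f, hfdef⟩ := hf
  set S : Submodule ℝ (Fin n → ℝ) :=
    Submodule.span ℝ ((fun x : Fin n → ℤ => fun i => ((x i : ℝ))) '' M) with hSdef
  have himg : ∀ x : Fin n → ℤ, x ∈ L → (fun i => ((x i : ℝ))) ∈ S := by
    intro x hx
    rw [← hLR] at hx
    have hle : AddSubgroup.closure M ≤ AddSubgroup.comap f S.toAddSubgroup := by
      apply (AddSubgroup.closure_le _).2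
      intro m hm
      have : f m ∈ S := by
        apply Submodule.subset_span
        exact ⟨m, hm, by funext i; rw [hfdef]⟩
      exact this
    have := hle hx
    have h2 : f x ∈ S := this
    have h3 : f x = fun i => ((x i : ℝ)) := by funext i; rw [hfdef]
    rwa [h3] at h2
  refine ⟨?_, hLR, ?_⟩
  · intro x hx hx0
    have h4 := hmin4 x hx hx0
    have h4' : (4:ℝ) ≤ ∑ i, ((x i : ℝ))^2 := by
      exact_mod_cast h4
    rw [show (2:ℝ) = Real.sqrt 4 by
      rw [show (4:ℝ) = 2^2 by norm_num, Real.sqrt_sq (by norm_num : (0:ℝ) ≤ 2)]]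
    exact Real.sqrt_le_sqrt h4'
  · apply Set.eq_of_subset_of_subset
    · -- span ⊆ hyperplane
      have hker : S ≤ LinearMap.ker (∑ i, LinearMap.proj (R := ℝ) (φ := fun _ : Fin n => ℝ) i) := by
        apply Submodule.span_le.2
        rintro y ⟨m, hm, rfl⟩
        obtain ⟨hmsum, -⟩ := (hL m).1 (hML hm)
        have : ∑ i, ((m i : ℝ)) = 0 := by
          have := congrArg (fun t : ℤ => (t : ℝ)) hmsum
          push_cast at this
          exact this
        simp only [SetLike.mem_coe, LinearMap.mem_ker, LinearMap.sum_apply,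
          LinearMap.proj_apply]
        exact this
      intro v hv
      have := hker hv
      simp only [LinearMap.mem_ker, LinearMap.sum_apply, LinearMap.proj_apply] at this
      exact this
    · -- hyperplane ⊆ span
      intro v hv
      simp only [Set.mem_setOf_eq] at hv
      have hdiff : ∀ i : Fin n, (Pi.single i (1:ℝ) - Pi.single z 1) ∈ S := by
        intro i
        by_cases hizz : i = z
        · subst hizz; simp only [sub_self]; exact zero_mem S
        · set q := addOrderOf (g i) with hqdef
          have hq : 0 < q := addOrderOf_pos (g i)
          have hq0 : (q:ℝ) ≠ 0 := Nat.cast_ne_zero.2 (by omega)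
          set w : Fin n → ℤ := (q:ℤ) • (E i - E z) with hw
          have hwL : w ∈ L := by
            rw [hL]
            constructor
            · have : ∀ m, w m = (q:ℤ) * (E i m - E z m) := fun m => rfl
              rw [Finset.sum_congr rfl (fun m _ => this m), ← Finset.mul_sum,
                Finset.sum_sub_distrib, sumE, sumE, sub_self, mul_zero]
            · have h1 : ∀ m, w m • g m = (q:ℤ) • ((E i m - E z m) • g m) := by
                intro m
                rw [show w m = (q:ℤ) * (E i m - E z m) from rfl, mul_smul]
              rw [Finset.sum_congr rfl (fun m _ => h1 m), ← Finset.smul_sum]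
              have h2 : ∑ m, (E i m - E z m) • g m = g i := by
                have : ∀ m, (E i m - E z m) • g m = E i m • g m - E z m • g m :=
                  fun m => sub_smul _ _ _
                rw [Finset.sum_congr rfl (fun m _ => this m), Finset.sum_sub_distrib,
                  sumEg, sumEg, hgz, sub_zero]
              rw [h2, natCast_zsmul, hqdef, addOrderOf_nsmul_eq_zero]
          have hwS := himg w hwL
          have heq : (Pi.single i (1:ℝ) - Pi.single z 1)
              = (q:ℝ)⁻¹ • (fun m => ((w m : ℝ)) : Fin n → ℝ) := by
            funext m
            have hwm : w m = (q:ℤ) * (E i m - E z m) := rfl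
            simp only [Pi.sub_apply, Pi.smul_apply, smul_eq_mul, hwm, hE, Pi.single_apply]
            push_cast
            split_ifs <;> field_simp
          rw [heq]
          exact S.smul_mem _ hwS
      have hvrep : v = ∑ i, v i • (Pi.single i (1:ℝ) - Pi.single z 1) := by
        have h1 : ∀ i : Fin n, v i • (Pi.single i (1:ℝ) - Pi.single z 1)
            = (Pi.single i (v i) : Fin n → ℝ) - v i • (Pi.single z (1:ℝ) : Fin n → ℝ) := by
          intro i
          rw [smul_sub]
          congr 1
          rw [← Pi.single_smul, smul_eq_mul, mul_one]
        rw [Finset.sum_congr rfl (fun i _ => h1 i), Finset.sum_sub_distrib,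
          Finset.univ_sum_single, ← Finset.sum_smul, hv, zero_smul, sub_zero]
      rw [hvrep]
      exact Submodule.sum_mem S (fun i _ => S.smul_mem _ (hdiff i))
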